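/- arXiv:1704.02676 — 4 statements merged into one kernel-verified Lean document; each statement's English description precedes it below -/
import Mathlib

section
/- If A is an n×n real Metzler matrix (off-diagonal entries nonnegative) that is Hurwitz (all eigenvalues have negative real part), then there exists a vector p with all entries strictly positive such that Aᵀp has all entries strictly negative. -/
open Matrix

namespace MetzlerAux

attribute [local instance] Matrix.linftyOpNormedRing Matrix.linftyOpNormedAlgebra

variable {n : ℕ}

lemma entry_continuous (i j : Fin n) :
    Continuous (fun M : Matrix (Fin n) (Fin n) ℝ => M i j) := by
  have : IsLinearMap ℝ (fun M : Matrix (Fin n) (Fin n) ℝ => M i j) :=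
    ⟨fun x y => rfl, fun c x => rfl⟩
  exact LinearMap.continuous_of_finiteDimensional (IsLinearMap.mk' _ this)

lemma pow_entry_nonneg {C : Matrix (Fin n) (Fin n) ℝ} (h : ∀ i j, 0 ≤ C i j) (k : ℕ) :
    ∀ i j, 0 ≤ (C ^ k) i j := by
  induction k with
  | zero => intro i j; simp [Matrix.one_apply]; positivity
  | succ k ih =>
    intro i j
    rw [pow_succ, Matrix.mul_apply]
    exact Finset.sum_nonneg fun l _ => mul_nonneg (ih i l) (h l j)

lemma inv_oneSub_nonneg {C : Matrix (Fin n) (Fin n) ℝ} (hn : ∀ i j, 0 ≤ C i j)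
    (h : ‖C‖ < 1) : ∀ i j, 0 ≤ Ring.inverse (1 - C) i j := by
  intro i j
  rw [← geom_series_eq_inverse C h]
  have hs := summable_geometric_of_norm_lt_one h
  have : (∑' k : ℕ, C ^ k) i j = ∑' k : ℕ, (C ^ k) i j := by
    let f : Matrix (Fin n) (Fin n) ℝ →L[ℝ] ℝ :=
      LinearMap.toContinuousLinearMap (IsLinearMap.mk' _ (⟨fun x y => rfl, fun c x => rfl⟩ :
        IsLinearMap ℝ (fun M : Matrix (Fin n) (Fin n) ℝ => M i j)))
    exact f.map_tsum hs
  show 0 ≤ (∑' k : ℕ, C ^ k) i j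
  rw [this]
  exact tsum_nonneg fun k => pow_entry_nonneg hn k i j

lemma prod_form {X U C : Matrix (Fin n) (Fin n) ℝ} (hX : X = U * (1 - C))
    (hU : IsUnit U) (hUinv : ∀ i j, 0 ≤ Ring.inverse U i j)
    (hC : ∀ i j, 0 ≤ C i j) (hCn : ‖C‖ < 1) :
    IsUnit X ∧ ∀ i j, 0 ≤ Ring.inverse X i j := by
  have hV : IsUnit (1 - C) := isUnit_one_sub_of_norm_lt_one hCn
  have hXU : IsUnit X := hX ▸ hU.mul hV
  refine ⟨hXU, fun i j => ?_⟩
  have hXu : X = ↑(hU.unit * hV.unit) := by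
    rw [Units.val_mul, hU.unit_spec, hV.unit_spec, hX]
  have hinv : Ring.inverse X = Ring.inverse (1 - C) * Ring.inverse U := by
    have h1 : Ring.inverse U = ↑hU.unit⁻¹ := by
      conv_lhs => rw [← hU.unit_spec]
      exact Ring.inverse_unit _
    have h2 : Ring.inverse (1 - C) = ↑hV.unit⁻¹ := by
      conv_lhs => rw [← hV.unit_spec]
      exact Ring.inverse_unit _
    rw [hXu, Ring.inverse_unit, _root_.mul_inv_rev, Units.val_mul, h1, h2]
  rw [hinv, Matrix.mul_apply]
  exact Finset.sum_nonneg fun l _ =>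
    mul_nonneg (inv_oneSub_nonneg hC hCn i l) (hUinv l j)

lemma step {M : Matrix (Fin n) (Fin n) ℝ} {t s : ℝ} (hst : s ≤ t)
    (hu : IsUnit (t • (1 : Matrix (Fin n) (Fin n) ℝ) - M))
    (hR : ∀ i j, 0 ≤ Ring.inverse (t • (1 : Matrix (Fin n) (Fin n) ℝ) - M) i j)
    (hsmall : (t - s) * ‖Ring.inverse (t • (1 : Matrix (Fin n) (Fin n) ℝ) - M)‖ < 1) :
    IsUnit (s • (1 : Matrix (Fin n) (Fin n) ℝ) - M) ∧
      ∀ i j, 0 ≤ Ring.inverse (s • (1 : Matrix (Fin n) (Fin n) ℝ) - M) i j := by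
  set Rt := Ring.inverse (t • (1 : Matrix (Fin n) (Fin n) ℝ) - M) with hRt
  set C := (t - s) • Rt with hCdef
  have hC : ∀ i j, 0 ≤ C i j := fun i j => by
    have := mul_nonneg (by linarith : (0:ℝ) ≤ t - s) (hR i j)
    simpa [hCdef, Matrix.smul_apply] using this
  have hCn : ‖C‖ < 1 := by
    rw [hCdef, norm_smul, Real.norm_eq_abs, abs_of_nonneg (by linarith : (0:ℝ) ≤ t - s)]
    exact hsmall
  have hmul : (t • (1 : Matrix (Fin n) (Fin n) ℝ) - M) * Rt = 1 :=
    Ring.mul_inverse_cancel _ hu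
  have hX : s • (1 : Matrix (Fin n) (Fin n) ℝ) - M
      = (t • (1 : Matrix (Fin n) (Fin n) ℝ) - M) * (1 - C) := by
    rw [mul_sub, mul_one, hCdef, Matrix.mul_smul, hmul, sub_smul]
    module
  exact prod_form hX hu hR hC hCn

lemma base (M : Matrix (Fin n) (Fin n) ℝ) (hMetz : ∀ i j, i ≠ j → 0 ≤ M i j) :
    ∃ s₁ : ℝ, 0 ≤ s₁ ∧ IsUnit (s₁ • (1 : Matrix (Fin n) (Fin n) ℝ) - M) ∧
      ∀ i j, 0 ≤ Ring.inverse (s₁ • (1 : Matrix (Fin n) (Fin n) ℝ) - M) i j := by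
  set c : ℝ := ∑ i, |M i i| with hc
  have hc0 : 0 ≤ c := Finset.sum_nonneg fun i _ => abs_nonneg _
  have hcle : ∀ i, |M i i| ≤ c :=
    fun i => Finset.single_le_sum (f := fun i => |M i i|)
      (fun j _ => abs_nonneg _) (Finset.mem_univ i)
  set B : Matrix (Fin n) (Fin n) ℝ := M + c • (1 : Matrix (Fin n) (Fin n) ℝ) with hB
  have hBnn : ∀ i j, 0 ≤ B i j := by
    intro i j
    rcases eq_or_ne i j with rfl | hij
    · have := hcle i
      simp only [hB, Matrix.add_apply, Matrix.smul_apply, Matrix.one_apply_eq, smul_eq_mul,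
        mul_one]
      cases abs_le.mp this; linarith
    · have := hMetz i j hij
      simp only [hB, Matrix.add_apply, Matrix.smul_apply, Matrix.one_apply_ne hij, smul_eq_mul,
        mul_zero, add_zero]
      exact this
  set d : ℝ := ‖B‖ + c + 1 with hd
  have hBn : (0:ℝ) ≤ ‖B‖ := norm_nonneg _
  have hd0 : 0 < d := by positivity
  refine ⟨‖B‖ + 1, by positivity, ?_⟩
  have hmul1 : (d • (1 : Matrix (Fin n) (Fin n) ℝ)) * (d⁻¹ • 1) = 1 := by
    rw [Matrix.smul_mul, Matrix.mul_smul, one_mul, smul_smul, mul_inv_cancel₀ hd0.ne', one_smul]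
  have hmul2 : (d⁻¹ • (1 : Matrix (Fin n) (Fin n) ℝ)) * (d • 1) = 1 := by
    rw [Matrix.smul_mul, Matrix.mul_smul, one_mul, smul_smul, inv_mul_cancel₀ hd0.ne', one_smul]
  let u : (Matrix (Fin n) (Fin n) ℝ)ˣ := ⟨d • 1, d⁻¹ • 1, hmul1, hmul2⟩
  have hU : IsUnit (d • (1 : Matrix (Fin n) (Fin n) ℝ)) := ⟨u, rfl⟩
  have hUinv : Ring.inverse (d • (1 : Matrix (Fin n) (Fin n) ℝ))
      = d⁻¹ • (1 : Matrix (Fin n) (Fin n) ℝ) := Ring.inverse_unit u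
  set C : Matrix (Fin n) (Fin n) ℝ := d⁻¹ • B with hCdef
  have hC : ∀ i j, 0 ≤ C i j := fun i j => by
    have := mul_nonneg (inv_nonneg.mpr hd0.le) (hBnn i j)
    simpa [hCdef, Matrix.smul_apply] using this
  have hCn : ‖C‖ < 1 := by
    rw [hCdef, norm_smul, Real.norm_eq_abs, abs_of_nonneg (inv_nonneg.mpr hd0.le),
      inv_mul_eq_div, div_lt_one hd0]
    simp only [hd]; linarith
  have hX : (‖B‖ + 1) • (1 : Matrix (Fin n) (Fin n) ℝ) - M
      = (d • (1 : Matrix (Fin n) (Fin n) ℝ)) * (1 - C) := by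
    rw [mul_sub, mul_one, hCdef, Matrix.mul_smul, Matrix.smul_mul, one_mul, smul_smul,
      inv_mul_cancel₀ hd0.ne', one_smul, hB, hd]
    module
  have h := prod_form hX hU (fun i j => by
    rw [hUinv]
    simp only [Matrix.smul_apply, Matrix.one_apply, smul_eq_mul]
    split <;> positivity) hC hCn
  exact h

lemma inverse_zero_nonneg (M : Matrix (Fin n) (Fin n) ℝ)
    (hMetz : ∀ i j, i ≠ j → 0 ≤ M i j)
    (hunit : ∀ s : ℝ, 0 ≤ s → IsUnit (s • (1 : Matrix (Fin n) (Fin n) ℝ) - M)) :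
    ∀ i j, 0 ≤ Ring.inverse ((0:ℝ) • (1 : Matrix (Fin n) (Fin n) ℝ) - M) i j := by
  obtain ⟨s₁, hs₁0, hs₁u, hs₁inv⟩ := base M hMetz
  set T : Set ℝ :=
    {s | 0 ≤ s ∧ ∀ i j, 0 ≤ Ring.inverse (s • (1 : Matrix (Fin n) (Fin n) ℝ) - M) i j}
    with hT
  set U : Set ℝ := {s | s ∈ Set.Icc 0 s₁ ∧ Set.Icc s s₁ ⊆ T} with hUdef
  have hs₁T : s₁ ∈ T := ⟨hs₁0, hs₁inv⟩
  have hUne : s₁ ∈ U := by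
    refine ⟨⟨hs₁0, le_refl _⟩, fun x hx => ?_⟩
    have : x = s₁ := le_antisymm hx.2 hx.1
    exact this ▸ hs₁T
  have hbdd : BddBelow U := ⟨0, fun x hx => hx.1.1⟩
  set c := sInf U with hcdef
  have hc0 : 0 ≤ c := le_csInf ⟨s₁, hUne⟩ fun x hx => hx.1.1
  have hcs₁ : c ≤ s₁ := csInf_le hbdd hUne
  -- continuity of entries of the resolvent at any nonneg point
  have hcont : ∀ (a : ℝ), 0 ≤ a → ∀ i j,
      ContinuousAt (fun s : ℝ => Ring.inverse (s • (1 : Matrix (Fin n) (Fin n) ℝ) - M) i j) a := by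
    intro a ha i j
    have h1 : ContinuousAt (fun s : ℝ => s • (1 : Matrix (Fin n) (Fin n) ℝ) - M) a :=
      ((continuous_id.smul continuous_const).sub continuous_const).continuousAt
    have h2 : ContinuousAt (Ring.inverse :
        Matrix (Fin n) (Fin n) ℝ → Matrix (Fin n) (Fin n) ℝ)
        (a • (1 : Matrix (Fin n) (Fin n) ℝ) - M) := by
      have := NormedRing.inverse_continuousAt (hunit a ha).unit
      rwa [(hunit a ha).unit_spec] at this
    have h3 : ContinuousAt (fun s : ℝ =>
        Ring.inverse (s • (1 : Matrix (Fin n) (Fin n) ℝ) - M)) a := h2.comp_of_eq h1 rfl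
    exact ContinuousAt.comp (entry_continuous i j).continuousAt h3
  have hIoc : ∀ s ∈ Set.Ioc c s₁, s ∈ T := by
    intro s hs
    obtain ⟨u, huU, hus⟩ := exists_lt_of_csInf_lt ⟨s₁, hUne⟩ hs.1
    exact huU.2 ⟨hus.le, hs.2⟩
  have hcT : c ∈ T := by
    rcases eq_or_lt_of_le hcs₁ with h | h
    · exact h ▸ hs₁T
    · refine ⟨hc0, fun i j => ?_⟩
      have htend : Filter.Tendsto
          (fun s : ℝ => Ring.inverse (s • (1 : Matrix (Fin n) (Fin n) ℝ) - M) i j)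
          (nhdsWithin c (Set.Ioi c))
          (nhds (Ring.inverse (c • (1 : Matrix (Fin n) (Fin n) ℝ) - M) i j)) :=
        (hcont c hc0 i j).continuousWithinAt
      have hev : ∀ᶠ s in nhdsWithin c (Set.Ioi c),
          0 ≤ Ring.inverse (s • (1 : Matrix (Fin n) (Fin n) ℝ) - M) i j := by
        filter_upwards [Ioc_mem_nhdsGT_of_mem (⟨le_refl c, h⟩ : c ∈ Set.Ico c s₁)]
          with s hs
        exact (hIoc s hs).2 i j
      exact ge_of_tendsto htend hev
  have hcU : c ∈ U := by
    refine ⟨⟨hc0, hcs₁⟩, fun x hx => ?_⟩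
    rcases eq_or_lt_of_le hx.1 with h | h
    · exact h ▸ hcT
    · exact hIoc x ⟨h, hx.2⟩
  have hc_eq : c = 0 := by
    by_contra hne
    have hcpos : 0 < c := lt_of_le_of_ne hc0 (Ne.symm hne)
    set N := ‖Ring.inverse (c • (1 : Matrix (Fin n) (Fin n) ℝ) - M)‖ with hN
    have hN0 : 0 ≤ N := norm_nonneg _
    set η := min c (N + 1)⁻¹ / 2 with hη
    have hη0 : 0 < η := by
      apply div_pos _ two_pos
      exact lt_min hcpos (by positivity)
    have hηc : η ≤ c / 2 := by
      have := min_le_left c (N + 1)⁻¹; rw [hη]; linarith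
    have hηN : η * N < 1 := by
      have h1 : η ≤ (N + 1)⁻¹ / 2 := by
        have := min_le_right c (N + 1)⁻¹; rw [hη]; linarith
      have h2 : (N + 1)⁻¹ * N < 1 := by
        rw [inv_mul_eq_div, div_lt_one (by positivity)]
        linarith
      nlinarith
    have hsU : c - η ∈ U := by
      refine ⟨⟨by linarith, by linarith⟩, fun x hx => ?_⟩
      rcases le_or_gt c x with h | h
      · exact hcU.2 ⟨h, hx.2⟩
      · have hx0 : 0 ≤ x := le_trans (by linarith [hx.1]) hx.1
        have hsmall : (c - x) * N < 1 := by
          have : c - x ≤ η := by linarith [hx.1]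
          nlinarith
        have := step h.le (hunit c hc0) hcT.2 hsmall
        exact ⟨hx0, this.2⟩
    have : c ≤ c - η := csInf_le hbdd hsU
    linarith
  have h0T : (0:ℝ) ∈ T := hc_eq ▸ (hcU.2 ⟨le_refl _, by linarith⟩)
  exact h0T.2

end MetzlerAux

theorem stmt_0 (n : ℕ) (A : Matrix (Fin n) (Fin n) ℝ)
    (hMetzler : ∀ i j, i ≠ j → 0 ≤ A i j)
    (hHurwitz : ∀ μ ∈ spectrum ℂ (A.map (algebraMap ℝ ℂ)), μ.re < 0) :
    ∃ p : Fin n → ℝ, (∀ i, 0 < p i) ∧ ∀ i, (Aᵀ.mulVec p) i < 0 := by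
  set M := Aᵀ with hM
  have hMetzT : ∀ i j, i ≠ j → 0 ≤ M i j := fun i j hij => hMetzler j i (Ne.symm hij)
  -- every nonnegative real shift is a unit
  have hunit : ∀ s : ℝ, 0 ≤ s → IsUnit (s • (1 : Matrix (Fin n) (Fin n) ℝ) - M) := by
    intro s hs
    rw [Matrix.isUnit_iff_isUnit_det, isUnit_iff_ne_zero]
    intro hdet
    have hdetA : (s • (1 : Matrix (Fin n) (Fin n) ℝ) - A).det = 0 := by
      have : (s • (1 : Matrix (Fin n) (Fin n) ℝ) - A)ᵀ
          = s • (1 : Matrix (Fin n) (Fin n) ℝ) - M := by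
        rw [hM, Matrix.transpose_sub, Matrix.transpose_smul, Matrix.transpose_one]
      rw [← Matrix.det_transpose, this, hdet]
    have hmem : (s : ℂ) ∈ spectrum ℂ (A.map (algebraMap ℝ ℂ)) := by
      rw [spectrum.mem_iff]
      rw [Matrix.isUnit_iff_isUnit_det, isUnit_iff_ne_zero]
      intro h
      apply h
      have hmap : algebraMap ℂ (Matrix (Fin n) (Fin n) ℂ) (s : ℂ) - A.map (algebraMap ℝ ℂ)
          = (s • (1 : Matrix (Fin n) (Fin n) ℝ) - A).map (algebraMap ℝ ℂ) := by
        ext i j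
        simp [Matrix.algebraMap_matrix_apply, Matrix.map_apply, Matrix.sub_apply,
          Matrix.smul_apply, Matrix.one_apply, apply_ite]
      rw [hmap]
      have hd := (RingHom.map_det (algebraMap ℝ ℂ) (s • (1 : Matrix (Fin n) (Fin n) ℝ) - A)).symm
      have heq : (s • (1 : Matrix (Fin n) (Fin n) ℝ) - A).map ⇑(algebraMap ℝ ℂ)
          = (algebraMap ℝ ℂ).mapMatrix (s • (1 : Matrix (Fin n) (Fin n) ℝ) - A) := rfl
      rw [heq, hd, hdetA, map_zero]
    have := hHurwitz _ hmem
    simp at this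
    linarith
  have hnn := MetzlerAux.inverse_zero_nonneg M hMetzT hunit
  have hu0 : IsUnit ((0:ℝ) • (1 : Matrix (Fin n) (Fin n) ℝ) - M) := hunit 0 le_rfl
  set R0 := Ring.inverse ((0:ℝ) • (1 : Matrix (Fin n) (Fin n) ℝ) - M) with hR0
  have hL : R0 * ((0:ℝ) • (1 : Matrix (Fin n) (Fin n) ℝ) - M) = 1 :=
    Ring.inverse_mul_cancel _ hu0
  have hRmul : (((0:ℝ) • (1 : Matrix (Fin n) (Fin n) ℝ) - M)) * R0 = 1 :=
    Ring.mul_inverse_cancel _ hu0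
  have hzs : (0:ℝ) • (1 : Matrix (Fin n) (Fin n) ℝ) - M = -M := by
    rw [zero_smul, zero_sub]
  refine ⟨fun i => ∑ j, R0 i j, fun i => ?_, fun i => ?_⟩
  · have hnonneg : ∀ j, 0 ≤ R0 i j := fun j => hnn i j
    have hsum : 0 ≤ ∑ j, R0 i j := Finset.sum_nonneg fun j _ => hnonneg j
    rcases hsum.lt_or_eq with h | h
    · exact h
    · exfalso
      have hzero : ∀ j, R0 i j = 0 := by
        intro j
        have := (Finset.sum_eq_zero_iff_of_nonneg (fun j _ => hnonneg j)).mp h.symm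
        exact this j (Finset.mem_univ j)
      have h1 : (R0 * ((0:ℝ) • (1 : Matrix (Fin n) (Fin n) ℝ) - M)) i i = 1 := by
        rw [hL]; simp [Matrix.one_apply]
      rw [Matrix.mul_apply] at h1
      simp only [hzero, zero_mul, Finset.sum_const_zero] at h1
      exact zero_ne_one h1
  · have hMp : M * R0 = -1 := by
      have : (-M) * R0 = 1 := by rw [← hzs]; exact hRmul
      have h2 : -(M * R0) = 1 := by rwa [Matrix.neg_mul] at this
      exact neg_eq_iff_eq_neg.mp h2
    have hmv : M.mulVec (fun i => ∑ j, R0 i j) = (M * R0).mulVec (fun _ => 1) := by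
      rw [← Matrix.mulVec_mulVec]
      ext i
      simp [Matrix.mulVec, dotProduct]
    rw [hM] at hmv ⊢
    rw [hmv, hMp]
    simp [Matrix.mulVec, dotProduct, Matrix.neg_apply, Matrix.one_apply]
end

section
/- Under the same hypotheses (H Metzler Hurwitz N×N, V_i ≥ 0 differentiable with V_i' ≤ Σ_j α_{ij}V_j), if q ∈ ℝᴺ has q > 0 entrywise and Hq ≤ -εq entrywise with ε > 0, then W(t) := max_i V_i(t)/q_i satisfies W(t) ≤ e^{-εt} W(0) for all t ≥ 0. -/
open Matrix

theorem stmt_10 (N : ℕ) (hN : 0 < N) (H : Matrix (Fin N) (Fin N) ℝ)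
    (hMetzler : ∀ i j, i ≠ j → 0 ≤ H i j)
    (hHurwitz : ∀ μ ∈ spectrum ℂ (H.map (algebraMap ℝ ℂ)), μ.re < 0)
    (q : Fin N → ℝ) (hq : ∀ i, 0 < q i)
    (ε : ℝ) (hε : 0 < ε) (hHq : ∀ i, (H.mulVec q) i ≤ -ε * q i)
    (V V' : Fin N → ℝ → ℝ)
    (hVderiv : ∀ i t, 0 ≤ t → HasDerivAt (V i) (V' i t) t)
    (hVnonneg : ∀ i t, 0 ≤ t → 0 ≤ V i t)
    (hVineq : ∀ i t, 0 ≤ t → V' i t ≤ ∑ j, H i j * V j t) :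
    ∀ t, 0 ≤ t → (⨆ i, V i t / q i) ≤ Real.exp (-ε * t) * ⨆ i, V i 0 / q i := by
  have : Nonempty (Fin N) := ⟨⟨0, hN⟩⟩
  set WW : ℝ → ℝ := fun t => ⨆ i, V i t / q i with hWWdef
  have hbdd : ∀ t : ℝ, BddAbove (Set.range fun i => V i t / q i) :=
    fun t => (Set.finite_range _).bddAbove
  have hle : ∀ i t, V i t / q i ≤ WW t := fun i t => le_ciSup (hbdd t) i
  have hWW0 : 0 ≤ WW 0 :=
    le_trans (div_nonneg (hVnonneg ⟨0, hN⟩ 0 le_rfl) (hq _).le) (hle ⟨0, hN⟩ 0)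
  -- continuity of WW on [0, ∞)
  have hWWcont : ContinuousOn WW (Set.Ici (0 : ℝ)) := by
    have : WW = fun t => Finset.univ.sup' Finset.univ_nonempty (fun i => V i t / q i) := by
      funext t
      rw [Finset.sup'_univ_eq_ciSup]
    rw [this]
    apply ContinuousOn.finset_sup'_apply
    intro i _
    intro x hx
    exact (((hVderiv i x hx).continuousAt).continuousWithinAt).div_const _
  -- the key component bound at a max-achieving index
  have key : ∀ j t, 0 ≤ t → (∀ k, V k t / q k ≤ WW t) → V j t / q j = WW t →
      V' j t ≤ -ε * q j * WW t := by
    intro j t ht hk hj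
    have hWWt : 0 ≤ WW t := hj ▸ div_nonneg (hVnonneg j t ht) (hq j).le
    calc V' j t ≤ ∑ k, H j k * V k t := hVineq j t ht
      _ ≤ ∑ k, (H j k * q k) * WW t := by
          apply Finset.sum_le_sum
          intro k _
          have hqk : (q k : ℝ) ≠ 0 := (hq k).ne'
          have : H j k * V k t = (H j k * q k) * (V k t / q k) := by
            field_simp
          rw [this]
          by_cases hkj : k = j
          · subst hkj; rw [hj]
          · have h1 : 0 ≤ H j k * q k :=
              mul_nonneg (hMetzler j k (fun h => hkj (by simpa using h.symm ▸ rfl))) (hq k).le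
            exact mul_le_mul_of_nonneg_left (hk k) h1
      _ = (H.mulVec q) j * WW t := by
          rw [← Finset.sum_mul]; rfl
      _ ≤ -ε * q j * WW t := mul_le_mul_of_nonneg_right (hHq j) hWWt
  -- main barrier lemma
  have main : ∀ δ : ℝ, 0 < δ → ∀ t, 0 ≤ t →
      WW t ≤ Real.exp (-ε * t) * WW 0 + δ * Real.exp (-(ε/2) * t) := by
    intro δ hδ
    set B : ℝ → ℝ := fun s => Real.exp (-ε * s) * WW 0 + δ * Real.exp (-(ε/2) * s) with hBdef
    have hBderiv : ∀ s, HasDerivAt B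
        (-ε * (Real.exp (-ε * s) * WW 0) + (-(ε/2)) * (δ * Real.exp (-(ε/2) * s))) s := by
      intro s
      have h1 : HasDerivAt (fun x : ℝ => -ε * x) (-ε) s := by
        simpa using (hasDerivAt_id s).const_mul (-ε)
      have h2 : HasDerivAt (fun x : ℝ => -(ε/2) * x) (-(ε/2)) s := by
        simpa using (hasDerivAt_id s).const_mul (-(ε/2))
      have e1 : HasDerivAt (fun x : ℝ => Real.exp (-ε * x)) (Real.exp (-ε * s) * (-ε)) s := h1.exp
      have e2 : HasDerivAt (fun x : ℝ => Real.exp (-(ε/2) * x))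
          (Real.exp (-(ε/2) * s) * (-(ε/2))) s := h2.exp
      have := (e1.mul_const (WW 0)).add (e2.const_mul δ)
      exact this.congr_deriv (by ring)
    have hBpos : ∀ s, 0 < B s := by
      intro s
      have : 0 ≤ Real.exp (-ε * s) * WW 0 := mul_nonneg (Real.exp_pos _).le hWW0
      have h2 : 0 < δ * Real.exp (-(ε/2) * s) := mul_pos hδ (Real.exp_pos _)
      simp only [hBdef]; linarith
    by_contra hcon
    push_neg at hcon
    obtain ⟨t₁, ht₁, hBt₁⟩ := hcon
    set S : Set ℝ := {s | 0 ≤ s ∧ B s ≤ WW s} with hSdef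
    have hSne : S.Nonempty := ⟨t₁, ht₁, hBt₁.le⟩
    have hSbdd : BddBelow S := ⟨0, fun s hs => hs.1⟩
    have hScl : IsClosed S := by
      have hg : ContinuousOn (fun s => WW s - B s) (Set.Ici (0:ℝ)) := by
        apply hWWcont.sub
        apply Continuous.continuousOn
        exact ((Real.continuous_exp.comp (continuous_const.mul continuous_id)).mul
          continuous_const).add (continuous_const.mul
            (Real.continuous_exp.comp (continuous_const.mul continuous_id)))
      have : S = Set.Ici (0:ℝ) ∩ (fun s => WW s - B s) ⁻¹' Set.Ici 0 := by
        ext s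
        simp only [hSdef, Set.mem_setOf_eq, Set.mem_inter_iff, Set.mem_Ici, Set.mem_preimage]
        constructor
        · rintro ⟨h1, h2⟩; exact ⟨h1, by linarith⟩
        · rintro ⟨h1, h2⟩; exact ⟨h1, by linarith⟩
      rw [this]
      exact hg.preimage_isClosed_of_isClosed isClosed_Ici isClosed_Ici
    set t₀ := sInf S with ht₀def
    have ht₀mem : t₀ ∈ S := hScl.csInf_mem hSne hSbdd
    have ht₀nonneg : 0 ≤ t₀ := ht₀mem.1
    have hB0 : WW 0 < B 0 := by
      simp only [hBdef, mul_zero, Real.exp_zero, mul_one, one_mul]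
      linarith
    have ht₀pos : 0 < t₀ := by
      rcases lt_or_eq_of_le ht₀nonneg with h | h
      · exact h
      · exfalso; rw [← h] at ht₀mem; exact absurd ht₀mem.2 (not_le.mpr hB0)
    have hbefore : ∀ s, 0 ≤ s → s < t₀ → WW s < B s := by
      intro s hs hst
      by_contra hc
      push_neg at hc
      exact absurd (csInf_le hSbdd ⟨hs, hc⟩) (not_le.mpr hst)
    -- pick a max-achieving index at t₀
    obtain ⟨j, hj⟩ := exists_eq_ciSup_of_finite (f := fun i => V i t₀ / q i)
    have hjW : V j t₀ / q j = WW t₀ := hj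
    -- g := V j / q j - B
    set g : ℝ → ℝ := fun s => V j s / q j - B s with hgdef
    set g' : ℝ := V' j t₀ / q j -
      (-ε * (Real.exp (-ε * t₀) * WW 0) + (-(ε/2)) * (δ * Real.exp (-(ε/2) * t₀))) with hg'def
    have hgderiv : HasDerivAt g g' t₀ :=
      ((hVderiv j t₀ ht₀nonneg).div_const (q j)).sub (hBderiv t₀)
    have hgt₀ : 0 ≤ g t₀ := by
      simp only [hgdef]
      have := ht₀mem.2
      rw [hjW]; linarith
    have hgneg : ∀ s, 0 < s → s < t₀ → g s < 0 := by
      intro s hs hst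
      have h1 : V j s / q j ≤ WW s := hle j s
      have h2 : WW s < B s := hbefore s hs.le hst
      show V j s / q j - B s < 0
      exact sub_neg.mpr (lt_of_le_of_lt h1 h2)
    -- left-sided slope argument: g' ≥ 0
    have hg'nonneg : 0 ≤ g' := by
      have hslope := hasDerivAt_iff_tendsto_slope.mp hgderiv
      have hmono : Filter.Tendsto (slope g t₀) (nhdsWithin t₀ (Set.Iio t₀)) (nhds g') :=
        hslope.mono_left (nhdsWithin_mono _ (fun x hx => ne_of_lt hx))
      refine ge_of_tendsto hmono ?_
      have hIoo : Set.Ioo 0 t₀ ∈ nhdsWithin t₀ (Set.Iio t₀) :=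
        Ioo_mem_nhdsLT_of_mem ⟨ht₀pos, le_rfl⟩
      refine Filter.eventually_of_mem hIoo ?_
      intro x hx
      have hgx : g x < 0 := hgneg x hx.1 hx.2
      rw [slope_def_field]
      have hd : x - t₀ ≤ 0 := by linarith [hx.2]
      have hn : g x - g t₀ ≤ 0 := by linarith
      exact div_nonneg_of_nonpos hn hd
    -- quantitative bound: g' < 0
    have hg'neg : g' < 0 := by
      have hkey := key j t₀ ht₀nonneg (fun k => hle k t₀) hjW
      have h1 : V' j t₀ / q j ≤ -ε * WW t₀ := by
        rw [div_le_iff₀ (hq j)]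
        calc V' j t₀ ≤ -ε * q j * WW t₀ := hkey
          _ = -ε * WW t₀ * q j := by ring
      have h2 : B t₀ ≤ WW t₀ := ht₀mem.2
      have h3 : -ε * WW t₀ ≤ -ε * B t₀ := by nlinarith
      have hD : 0 < δ * Real.exp (-(ε/2) * t₀) := mul_pos hδ (Real.exp_pos _)
      have hA : 0 ≤ Real.exp (-ε * t₀) * WW 0 := mul_nonneg (Real.exp_pos _).le hWW0
      simp only [hg'def, hBdef] at *
      nlinarith
    linarith
  -- conclude
  intro t ht
  have hkey : ∀ δ : ℝ, 0 < δ → WW t ≤ Real.exp (-ε * t) * WW 0 + δ := by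
    intro δ hδ
    calc WW t ≤ Real.exp (-ε * t) * WW 0 + δ * Real.exp (-(ε/2) * t) := main δ hδ t ht
      _ ≤ Real.exp (-ε * t) * WW 0 + δ := by
          have h1 : Real.exp (-(ε/2) * t) ≤ 1 := by
            rw [Real.exp_le_one_iff]
            nlinarith
          nlinarith
  exact le_of_forall_pos_le_add hkey
end

section
/- Let N : ℝ≥0 → ℝ^{n×n} be continuous and suppose there exist α, β, λ > 0 and a differentiable diagonal matrix function M(t) with αI ⪯ M(t) ⪯ βI and M'(t) + N(t)ᵀM(t) + M(t)N(t) ⪯ -2λM(t) for all t. If x : ℝ≥0 → ℝⁿ is a solution of the (possibly nonlinear, factored) system ẋ(t) = N(t)x(t), then |x(t)| ≤ √(β/α) e^{-λt}|x(0)|. -/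
open Matrix

/-- Loewner order `X ⪯ Y` for real matrices. -/
def Loewner {n : ℕ} (X Y : Matrix (Fin n) (Fin n) ℝ) : Prop :=
  (Y - X).PosSemidef

/-- Euclidean norm of a vector in `Fin n → ℝ`. -/
noncomputable def vecEnorm {n : ℕ} (v : Fin n → ℝ) : ℝ :=
  Real.sqrt (∑ i, (v i) ^ 2)

lemma loewner_quad {n : ℕ} {A B : Matrix (Fin n) (Fin n) ℝ} (h : Loewner A B)
    (x : Fin n → ℝ) : x ⬝ᵥ A *ᵥ x ≤ x ⬝ᵥ B *ᵥ x := by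
  have := Matrix.PosSemidef.dotProduct_mulVec_nonneg h x
  simp only [RCLike.star_def, star_trivial, RCLike.re_to_real, Matrix.sub_mulVec,
    dotProduct_sub] at this
  linarith

lemma quad_diag {n : ℕ} (d : Fin n → ℝ) (x : Fin n → ℝ) :
    x ⬝ᵥ (Matrix.diagonal d) *ᵥ x = ∑ i, d i * x i ^ 2 := by
  simp [dotProduct, mulVec_diagonal]
  exact Finset.sum_congr rfl fun i _ => by ring

lemma quad_tmul {n : ℕ} (d : Fin n → ℝ) (A : Matrix (Fin n) (Fin n) ℝ) (x : Fin n → ℝ) :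
    x ⬝ᵥ (Aᵀ * Matrix.diagonal d) *ᵥ x = ∑ i, d i * (A *ᵥ x) i * x i := by
  rw [← Matrix.mulVec_mulVec, Matrix.dotProduct_mulVec, Matrix.vecMul_transpose]
  simp [dotProduct, mulVec_diagonal]
  exact Finset.sum_congr rfl fun i _ => by ring

lemma quad_mul {n : ℕ} (d : Fin n → ℝ) (A : Matrix (Fin n) (Fin n) ℝ) (x : Fin n → ℝ) :
    x ⬝ᵥ (Matrix.diagonal d * A) *ᵥ x = ∑ i, d i * x i * (A *ᵥ x) i := by
  rw [← Matrix.mulVec_mulVec]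
  simp [dotProduct, mulVec_diagonal]
  exact Finset.sum_congr rfl fun i _ => by ring

theorem stmt_13 (n : ℕ) (N : ℝ → Matrix (Fin n) (Fin n) ℝ)
    (hNcont : ∀ i j, Continuous (fun t => N t i j))
    (α β lam : ℝ) (hα : 0 < α) (hβ : 0 < β) (hlam : 0 < lam)
    (m m' : ℝ → Fin n → ℝ)
    (hderiv : ∀ t i, HasDerivAt (fun s => m s i) (m' t i) t)
    (hlow : ∀ t, 0 ≤ t →
      Loewner (α • (1 : Matrix (Fin n) (Fin n) ℝ)) (Matrix.diagonal (m t)))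
    (hup : ∀ t, 0 ≤ t →
      Loewner (Matrix.diagonal (m t)) (β • (1 : Matrix (Fin n) (Fin n) ℝ)))
    (hineq : ∀ t, 0 ≤ t →
      Loewner (Matrix.diagonal (m' t) + (N t)ᵀ * Matrix.diagonal (m t) +
          Matrix.diagonal (m t) * N t)
        ((-(2 * lam)) • Matrix.diagonal (m t)))
    (x : ℝ → Fin n → ℝ)
    (hx : ∀ t, 0 ≤ t → ∀ i, HasDerivAt (fun s => x s i) ((N t).mulVec (x t) i) t) :
    ∀ t, 0 ≤ t →
      vecEnorm (x t) ≤ Real.sqrt (β / α) * Real.exp (-lam * t) * vecEnorm (x 0) := by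
  -- the Lyapunov function
  set V : ℝ → ℝ := fun t => ∑ i, m t i * x t i ^ 2 with hVdef
  set S : ℝ → ℝ := fun t => ∑ i, x t i ^ 2 with hSdef
  -- quadratic form of identity
  have quad_one : ∀ (c : ℝ) (v : Fin n → ℝ),
      v ⬝ᵥ (c • (1 : Matrix (Fin n) (Fin n) ℝ)) *ᵥ v = c * ∑ i, v i ^ 2 := by
    intro c v
    rw [Matrix.smul_mulVec, dotProduct_smul, Matrix.one_mulVec, smul_eq_mul]
    congr 1
    simp [dotProduct, sq]
  -- bounds on V
  have hVlow : ∀ t, 0 ≤ t → α * S t ≤ V t := by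
    intro t ht
    have := loewner_quad (hlow t ht) (x t)
    rwa [quad_one, quad_diag] at this
  have hVup : ∀ t, 0 ≤ t → V t ≤ β * S t := by
    intro t ht
    have := loewner_quad (hup t ht) (x t)
    rwa [quad_one, quad_diag] at this
  -- derivative of V
  have hVderiv : ∀ t, 0 ≤ t → HasDerivAt V
      (∑ i, (m' t i * x t i ^ 2 + m t i * (2 * x t i * (N t).mulVec (x t) i))) t := by
    intro t ht
    apply HasDerivAt.fun_sum
    intro i _
    have hxi := hx t ht i
    have hxsq : HasDerivAt (fun s => x s i ^ 2) (2 * x t i * (N t).mulVec (x t) i) t := by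
      have := hxi.fun_pow 2
      simpa [mul_comm, mul_assoc] using this
    exact (hderiv t i).mul hxsq
  -- the derivative is at most -2λ V
  have hVineq : ∀ t, 0 ≤ t →
      (∑ i, (m' t i * x t i ^ 2 + m t i * (2 * x t i * (N t).mulVec (x t) i)))
        ≤ -(2 * lam) * V t := by
    intro t ht
    have h := loewner_quad (hineq t ht) (x t)
    rw [Matrix.add_mulVec, Matrix.add_mulVec, dotProduct_add, dotProduct_add,
      quad_diag, quad_tmul, quad_mul, Matrix.smul_mulVec, dotProduct_smul,
      quad_diag] at h
    calc (∑ i, (m' t i * x t i ^ 2 + m t i * (2 * x t i * (N t).mulVec (x t) i)))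
        = (∑ i, m' t i * x t i ^ 2) + (∑ i, m t i * (N t *ᵥ x t) i * x t i)
          + ∑ i, m t i * x t i * (N t *ᵥ x t) i := by
          rw [← Finset.sum_add_distrib, ← Finset.sum_add_distrib]
          exact Finset.sum_congr rfl fun i _ => by ring
      _ ≤ (-(2 * lam)) • (∑ i, m t i * x t i ^ 2) := h
      _ = -(2 * lam) * V t := by simp [hVdef]
  -- W is antitone on [0, ∞)
  set W : ℝ → ℝ := fun t => V t * Real.exp (2 * lam * t) with hWdef
  have hWderiv : ∀ t, 0 ≤ t → HasDerivAt W
      ((∑ i, (m' t i * x t i ^ 2 + m t i * (2 * x t i * (N t).mulVec (x t) i)))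
        * Real.exp (2 * lam * t) + V t * (2 * lam * Real.exp (2 * lam * t))) t := by
    intro t ht
    have he : HasDerivAt (fun s => Real.exp (2 * lam * s)) (2 * lam * Real.exp (2 * lam * t)) t := by
      have := ((hasDerivAt_id t).const_mul (2 * lam)).exp
      simpa [mul_comm] using this
    exact (hVderiv t ht).mul he
  have hWanti : AntitoneOn W (Set.Ici (0 : ℝ)) := by
    apply antitoneOn_of_deriv_nonpos (convex_Ici 0)
    · intro t ht
      exact (ContinuousAt.continuousWithinAt
        (HasDerivAt.continuousAt (hWderiv t ht)))
    · intro t ht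
      rw [interior_Ici] at ht
      exact ((hWderiv t (le_of_lt ht)).differentiableAt).differentiableWithinAt
    · intro t ht
      rw [interior_Ici] at ht
      rw [(hWderiv t (le_of_lt ht)).deriv]
      have h1 := hVineq t (le_of_lt ht)
      have h2 : (0:ℝ) < Real.exp (2 * lam * t) := Real.exp_pos _
      nlinarith [hVineq t (le_of_lt ht), h2]
  -- conclude
  intro t ht
  have hW0 : W t ≤ W 0 := hWanti Set.self_mem_Ici ht ht
  have hVt : V t ≤ V 0 * Real.exp (-(2 * lam * t)) := by
    have h2 : (0:ℝ) < Real.exp (2 * lam * t) := Real.exp_pos _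
    rw [Real.exp_neg, ← div_eq_mul_inv, le_div_iff₀ h2]
    simpa [hWdef] using hW0
  have hSbound : S t ≤ β / α * Real.exp (-(2 * lam * t)) * S 0 := by
    have h1 : α * S t ≤ V t := hVlow t ht
    have h2 : V 0 ≤ β * S 0 := hVup 0 le_rfl
    have h3 : (0:ℝ) < Real.exp (-(2 * lam * t)) := Real.exp_pos _
    have h4 : V 0 * Real.exp (-(2 * lam * t)) ≤ β * S 0 * Real.exp (-(2 * lam * t)) :=
      mul_le_mul_of_nonneg_right h2 h3.le
    rw [div_mul_eq_mul_div, div_mul_eq_mul_div, le_div_iff₀ hα]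
    nlinarith
  have hS0 : (0:ℝ) ≤ S 0 := Finset.sum_nonneg fun i _ => sq_nonneg _
  have hexp : Real.exp (-(2 * lam * t)) = Real.exp (-lam * t) ^ 2 := by
    rw [← Real.exp_nat_mul]
    ring_nf
  unfold vecEnorm
  have := Real.sqrt_le_sqrt hSbound
  refine this.trans (le_of_eq ?_)
  rw [Real.sqrt_mul (by positivity), Real.sqrt_mul (by positivity), hexp,
    Real.sqrt_sq (Real.exp_nonneg _)]
end

section
/- Let A ∈ ℝ^{n×n} be Metzler. Then A is Hurwitz if and only if there exists a positive definite diagonal matrix D such that AᵀD + DA is negative definite. -/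
open Matrix Finset Complex

section Aux
variable {n : ℕ}

lemma nonneg_of_mulVec_nonneg (M : Matrix (Fin n) (Fin n) ℝ)
    (hoff : ∀ i j, i ≠ j → M i j ≤ 0) (hrow : ∀ i, 0 < ∑ j, M i j)
    (x : Fin n → ℝ) (hx : ∀ i, 0 ≤ (M *ᵥ x) i) : ∀ i, 0 ≤ x i := by
  by_contra hcon
  push_neg at hcon
  obtain ⟨j, hj⟩ := hcon
  obtain ⟨i, -, hmin⟩ := Finset.exists_min_image Finset.univ x ⟨j, Finset.mem_univ j⟩
  have hxi : x i < 0 := lt_of_le_of_lt (hmin j (Finset.mem_univ j)) hj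
  have hxe : (M *ᵥ x) i = ∑ k, M i k * x k := by
    simp [Matrix.mulVec, dotProduct]
  have h1 : (M *ᵥ x) i ≤ (∑ k, M i k) * x i := by
    rw [hxe, Finset.sum_mul]
    refine Finset.sum_le_sum fun k _ => ?_
    rcases eq_or_ne k i with rfl | hk
    · exact le_rfl
    · exact mul_le_mul_of_nonpos_left (hmin k (Finset.mem_univ k)) (hoff i k (Ne.symm hk))
  have h2 : (∑ k, M i k) * x i < 0 := mul_neg_of_pos_of_neg (hrow i) hxi
  exact absurd (hx i) (not_le.mpr (lt_of_le_of_lt h1 h2))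

lemma det_ne_zero_of_dom (M : Matrix (Fin n) (Fin n) ℝ)
    (hoff : ∀ i j, i ≠ j → M i j ≤ 0) (hrow : ∀ i, 0 < ∑ j, M i j) :
    M.det ≠ 0 := by
  intro hdet
  obtain ⟨v, hv, hMv⟩ := (Matrix.exists_mulVec_eq_zero_iff).mpr hdet
  have h1 : ∀ i, 0 ≤ v i := by
    refine nonneg_of_mulVec_nonneg M hoff hrow v fun i => ?_
    rw [hMv]; exact le_rfl
  have h2 : ∀ i, 0 ≤ (-v) i := by
    refine nonneg_of_mulVec_nonneg M hoff hrow (-v) fun i => ?_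
    rw [Matrix.mulVec_neg, hMv]; simp
  apply hv
  ext i
  exact le_antisymm (by simpa using h2 i) (h1 i)

lemma inv_nonneg_of_dom (M : Matrix (Fin n) (Fin n) ℝ)
    (hoff : ∀ i j, i ≠ j → M i j ≤ 0) (hrow : ∀ i, 0 < ∑ j, M i j) :
    ∀ i j, 0 ≤ M⁻¹ i j := by
  intro i j
  have hdet : IsUnit M.det := isUnit_iff_ne_zero.mpr (det_ne_zero_of_dom M hoff hrow)
  have hMi : M * M⁻¹ = 1 := Matrix.mul_nonsing_inv M hdet
  refine nonneg_of_mulVec_nonneg M hoff hrow (fun k => M⁻¹ k j) (fun l => ?_) i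
  have : (M *ᵥ fun k => M⁻¹ k j) l = (M * M⁻¹) l j := by
    simp [Matrix.mulVec, dotProduct, Matrix.mul_apply]
  rw [this, hMi]
  by_cases h : l = j <;> simp [Matrix.one_apply, h]

lemma neg_inv_nonneg (A : Matrix (Fin n) (Fin n) ℝ)
    (hMet : ∀ i j, i ≠ j → 0 ≤ A i j)
    (hspec : ∀ t : ℝ, 0 ≤ t → (t • (1 : Matrix (Fin n) (Fin n) ℝ) - A).det ≠ 0) :
    ∀ i j, 0 ≤ (-A)⁻¹ i j := by
  set M : ℝ → Matrix (Fin n) (Fin n) ℝ := fun t => t • (1 : Matrix (Fin n) (Fin n) ℝ) - A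
    with hMdef
  set G : ℝ → Matrix (Fin n) (Fin n) ℝ := fun t => (M t)⁻¹ with hGdef
  set K : ℝ := ∑ i, ∑ j, |A i j| with hK
  have hKnn : 0 ≤ K := Finset.sum_nonneg fun i _ => Finset.sum_nonneg fun j _ => abs_nonneg _
  set t₀ : ℝ := K + 1 with ht₀
  have ht₀pos : (0:ℝ) < t₀ := by positivity
  -- entries of M t
  have hMentry : ∀ t (i j : Fin n), M t i j = (if i = j then t else 0) - A i j := by
    intro t i j
    simp [hMdef, Matrix.sub_apply, Matrix.smul_apply, Matrix.one_apply, smul_eq_mul,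
      mul_ite, mul_one, mul_zero]
  have hMoff : ∀ t (i j : Fin n), i ≠ j → M t i j ≤ 0 := by
    intro t i j hij
    rw [hMentry t i j, if_neg hij]
    simpa using hMet i j hij
  have hrowA : ∀ i : Fin n, ∑ j, A i j ≤ K := by
    intro i
    calc ∑ j, A i j ≤ ∑ j, |A i j| := Finset.sum_le_sum fun j _ => le_abs_self _
    _ ≤ K := Finset.single_le_sum (f := fun i => ∑ j, |A i j|)
        (fun i _ => Finset.sum_nonneg fun j _ => abs_nonneg _) (Finset.mem_univ i)
  have hMrow : ∀ t, t₀ ≤ t → ∀ i : Fin n, 0 < ∑ j, M t i j := by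
    intro t ht i
    have : ∑ j, M t i j = t - ∑ j, A i j := by
      simp [hMentry, Finset.sum_sub_distrib]
    rw [this]
    have := hrowA i
    linarith
  -- the set S
  set S : Set ℝ := {t | 0 ≤ t ∧ t ≤ t₀ ∧ ∀ u, t ≤ u → u ≤ t₀ → ∀ i j, 0 ≤ G u i j} with hS
  have ht₀S : t₀ ∈ S := by
    refine ⟨le_of_lt ht₀pos, le_rfl, fun u hu hu' i j => ?_⟩
    exact inv_nonneg_of_dom (M u) (hMoff u) (hMrow u hu) i j
  have hne : S.Nonempty := ⟨t₀, ht₀S⟩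
  have hbdd : BddBelow S := ⟨0, fun t ht => ht.1⟩
  set c : ℝ := sInf S with hc
  have hc0 : 0 ≤ c := le_csInf hne fun t ht => ht.1
  have hct₀ : c ≤ t₀ := csInf_le hbdd ht₀S
  have hGgt : ∀ u, c < u → u ≤ t₀ → ∀ i j, 0 ≤ G u i j := by
    intro u hcu hut i j
    obtain ⟨t, htS, htu⟩ := exists_lt_of_csInf_lt hne hcu
    exact htS.2.2 u htu.le hut i j
  have hdetc : (M c).det ≠ 0 := hspec c hc0
  -- continuity of G at c, and nonnegativity of G c
  have hGc : ∀ i j, 0 ≤ G c i j := by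
    rcases eq_or_lt_of_le hct₀ with heq | hlt
    · intro i j; exact inv_nonneg_of_dom (M c) (hMoff c) (hMrow c heq.ge) i j
    · intro i j
      have hMcont : Continuous M := by
        apply continuous_matrix
        intro a b
        have : (fun u : ℝ => M u a b) = fun u => (if a = b then u else 0) - A a b := by
          funext u; exact hMentry u a b
        rw [this]
        by_cases hab : a = b <;> simp [hab] <;> fun_prop
      have hfc : ContinuousAt (fun u => G u i j) c := by
        have h1 : (fun u => G u i j)
            = fun u => ((M u).det)⁻¹ * (M u).adjugate i j := by
          funext u
          rw [hGdef]
          simp [Matrix.inv_def, Ring.inverse_eq_inv', Matrix.smul_apply, smul_eq_mul]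
        rw [h1]
        exact ((hMcont.matrix_det.continuousAt).inv₀ hdetc).mul
          ((hMcont.matrix_adjugate.matrix_elem i j).continuousAt)
      have hmem : Set.Ioo c t₀ ∈ nhdsWithin c (Set.Ioi c) :=
        Ioo_mem_nhdsGT_of_mem ⟨le_rfl, hlt⟩
      refine ge_of_tendsto (hfc.continuousWithinAt (s := Set.Ioi c)) ?_
      filter_upwards [hmem] with u hu
      exact hGgt u hu.1 hu.2.le i j
  -- step down
  by_cases hcpos : 0 < c
  · exfalso
    set P := G c with hP
    have hPdef : P = (M c)⁻¹ := hP
    have hPinv : M c * P = 1 := by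
      rw [hPdef]; exact Matrix.mul_nonsing_inv _ (isUnit_iff_ne_zero.mpr hdetc)
    have hPnn : ∀ a b, 0 ≤ P a b := fun a b => hGc a b
    clear_value P
    set K' : ℝ := ∑ i, ∑ j, P i j with hK'
    have hK'nn : 0 ≤ K' :=
      Finset.sum_nonneg fun i _ => Finset.sum_nonneg fun j _ => hPnn i j
    clear_value K'
    set δ : ℝ := min c (1 / (K' + 1)) with hδ
    have hδpos : 0 < δ := lt_min hcpos (by positivity)
    have hδc : δ ≤ c := min_le_left _ _
    have hδK' : δ ≤ 1 / (K' + 1) := min_le_right _ _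
    clear_value δ
    have hstep : c - δ ∈ S := by
      refine ⟨by linarith, by linarith, fun u hu hut i j => ?_⟩
      rcases le_or_gt c u with hcu | huc
      · rcases eq_or_lt_of_le hcu with rfl | h
        · rw [← hP]; exact hGc i j
        · exact hGgt u h hut i j
      · set δ' : ℝ := c - u with hδ'
        have hδ'pos : 0 < δ' := by simp [hδ']; linarith
        have hδ'le : δ' ≤ δ := by simp [hδ']; linarith
        clear_value δ'
        set N' : Matrix (Fin n) (Fin n) ℝ := 1 - δ' • P with hN'
        have hN'off : ∀ a b, a ≠ b → N' a b ≤ 0 := by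
          intro a b hab
          have : N' a b = -(δ' * P a b) := by
            simp [hN', Matrix.sub_apply, Matrix.one_apply, hab, Matrix.smul_apply, smul_eq_mul]
          rw [this, neg_nonpos]
          exact mul_nonneg hδ'pos.le (hPnn a b)
        have hProw : ∀ a : Fin n, ∑ b, P a b ≤ K' := by
          rw [hK']
          exact fun a => Finset.single_le_sum (f := fun a => ∑ b, P a b)
            (fun a _ => Finset.sum_nonneg fun b _ => hPnn a b) (Finset.mem_univ a)
        have hN'row : ∀ a : Fin n, 0 < ∑ b, N' a b := by
          intro a
          have h1 : ∑ b, N' a b = 1 - δ' * ∑ b, P a b := by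
            simp [hN', Matrix.sub_apply, Matrix.one_apply, Finset.sum_sub_distrib,
              Matrix.smul_apply, smul_eq_mul, Finset.mul_sum]
          rw [h1]
          have h2 : δ' * ∑ b, P a b ≤ δ' * K' :=
            mul_le_mul_of_nonneg_left (hProw a) hδ'pos.le
          have h3 : δ' * K' ≤ (1 / (K' + 1)) * K' := by
            apply mul_le_mul_of_nonneg_right _ hK'nn
            exact hδ'le.trans hδK'
          have h4 : (1 / (K' + 1)) * K' < 1 := by
            rw [div_mul_eq_mul_div, div_lt_one (by linarith)]
            linarith
          linarith
        have hcu' : u = c - δ' := by rw [hδ']; ring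
        have hMu : M u = M c - δ' • (1 : Matrix (Fin n) (Fin n) ℝ) := by
          show u • (1 : Matrix (Fin n) (Fin n) ℝ) - A
              = (c • (1 : Matrix (Fin n) (Fin n) ℝ) - A) - δ' • 1
          rw [hcu', sub_smul]
          abel
        have hfact : M u = M c * N' := by
          rw [hN', Matrix.mul_sub, Matrix.mul_one, Matrix.mul_smul, hPinv, hMu]
        have hGu : G u = N'⁻¹ * P := by
          show (M u)⁻¹ = N'⁻¹ * P
          rw [hfact, Matrix.mul_inv_rev, hPdef]
        rw [hGu]
        rw [Matrix.mul_apply]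
        exact Finset.sum_nonneg fun k _ =>
          mul_nonneg (inv_nonneg_of_dom N' hN'off hN'row i k) (hPnn k j)
    have : c ≤ c - δ := csInf_le hbdd hstep
    linarith
  · have hceq : c = 0 := le_antisymm (not_lt.mp hcpos) hc0
    intro i j
    have := hGc i j
    rw [hceq] at this
    simpa [hGdef, hMdef] using this

lemma quad_neg (B : Matrix (Fin n) (Fin n) ℝ) (q : Fin n → ℝ)
    (hsym : ∀ i j, B i j = B j i) (hoff : ∀ i j, i ≠ j → 0 ≤ B i j)
    (hq : ∀ i, 0 < q i) (hBq : ∀ i, (B *ᵥ q) i < 0)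
    (x : Fin n → ℝ) (hx : x ≠ 0) :
    ∑ i, ∑ j, B i j * x i * x j < 0 := by
  have hmv : ∀ i, (B *ᵥ q) i = ∑ j, B i j * q j := by
    intro i; simp [Matrix.mulVec, dotProduct]
  have key : ∀ i j, B i j * (x i * x j)
      ≤ B i j * (q j * x i ^ 2 / (2 * q i) + q i * x j ^ 2 / (2 * q j)) := by
    intro i j
    rcases eq_or_ne i j with rfl | hij
    · have h1 : q i * x i ^ 2 / (2 * q i) + q i * x i ^ 2 / (2 * q i) = x i * x i := by
        rw [← add_div, div_eq_iff (by linarith [hq i] : (2:ℝ) * q i ≠ 0)]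
        ring
      rw [h1]
    · refine mul_le_mul_of_nonneg_left ?_ (hoff i j hij)
      have h2i : (0:ℝ) < 2 * q i := by linarith [hq i]
      have h2j : (0:ℝ) < 2 * q j := by linarith [hq j]
      rw [div_add_div _ _ (ne_of_gt h2i) (ne_of_gt h2j), le_div_iff₀ (by positivity)]
      nlinarith [sq_nonneg (q j * x i - q i * x j), mul_pos (hq i) (hq j)]
  have sum1 : ∑ i, ∑ j, B i j * x i * x j
      ≤ ∑ i, (x i ^ 2 / q i) * (B *ᵥ q) i := by
    have h3 : ∑ i, ∑ j, B i j * x i * x j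
        ≤ ∑ i, ∑ j, B i j * (q j * x i ^ 2 / (2 * q i) + q i * x j ^ 2 / (2 * q j)) := by
      refine Finset.sum_le_sum fun i _ => Finset.sum_le_sum fun j _ => ?_
      rw [mul_assoc]
      exact key i j
    refine h3.trans (le_of_eq ?_)
    have h4 : ∀ i j : Fin n, B i j * (q j * x i ^ 2 / (2 * q i) + q i * x j ^ 2 / (2 * q j))
        = (x i ^ 2 / (2 * q i)) * (B i j * q j) + (x j ^ 2 / (2 * q j)) * (B i j * q i) := by
      intro i j; ring
    simp_rw [h4, Finset.sum_add_distrib]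
    rw [Finset.sum_comm (f := fun i j => (x j ^ 2 / (2 * q j)) * (B i j * q i))]
    have h5 : ∀ i : Fin n, ∑ j, (x i ^ 2 / (2 * q i)) * (B i j * q j)
        = (x i ^ 2 / (2 * q i)) * (B *ᵥ q) i := by
      intro i; rw [hmv, Finset.mul_sum]
    have h6 : ∀ i : Fin n, ∑ j, (x i ^ 2 / (2 * q i)) * (B j i * q j)
        = (x i ^ 2 / (2 * q i)) * (B *ᵥ q) i := by
      intro i
      rw [hmv, Finset.mul_sum]
      congr 1
      ext j
      rw [hsym j i]
    simp_rw [h5, h6]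
    rw [← Finset.sum_add_distrib]
    congr 1
    ext i
    have : q i ≠ 0 := ne_of_gt (hq i)
    field_simp
    ring
  refine lt_of_le_of_lt sum1 ?_
  have hterm : ∀ i, (x i ^ 2 / q i) * (B *ᵥ q) i ≤ 0 := by
    intro i
    apply mul_nonpos_of_nonneg_of_nonpos
    · exact div_nonneg (sq_nonneg _) (hq i).le
    · exact (hBq i).le
  obtain ⟨i₀, hi₀⟩ := Function.ne_iff.mp hx
  have hstrict : (x i₀ ^ 2 / q i₀) * (B *ᵥ q) i₀ < 0 := by
    apply mul_neg_of_pos_of_neg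
    · have hne : x i₀ ≠ 0 := by simpa using hi₀
      exact div_pos (lt_of_le_of_ne (sq_nonneg _) (Ne.symm (pow_ne_zero 2 hne))) (hq i₀)
    · exact hBq i₀
  calc ∑ i, (x i ^ 2 / q i) * (B *ᵥ q) i
      < ∑ _i : Fin n, (0:ℝ) :=
        Finset.sum_lt_sum (fun i _ => hterm i) ⟨i₀, Finset.mem_univ i₀, hstrict⟩
    _ = 0 := by simp

lemma exists_pos_vec (A : Matrix (Fin n) (Fin n) ℝ)
    (hMet : ∀ i j, i ≠ j → 0 ≤ A i j)
    (hspec : ∀ t : ℝ, 0 ≤ t → (t • (1 : Matrix (Fin n) (Fin n) ℝ) - A).det ≠ 0) :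
    ∃ q : Fin n → ℝ, (∀ i, 0 < q i) ∧ A *ᵥ q = fun _ => -1 := by
  have hdet : (-A).det ≠ 0 := by
    have := hspec 0 le_rfl
    simpa using this
  have hinv := neg_inv_nonneg A hMet hspec
  set q : Fin n → ℝ := (-A)⁻¹ *ᵥ (fun _ => 1) with hqdef
  have hq0 : ∀ i, 0 ≤ q i := by
    intro i
    rw [hqdef]
    simp only [Matrix.mulVec, dotProduct]
    exact Finset.sum_nonneg fun j _ => by simpa using hinv i j
  have hAq : A *ᵥ q = fun _ => -1 := by
    have h1 : (-A) *ᵥ q = fun _ => 1 := by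
      rw [hqdef, Matrix.mulVec_mulVec, Matrix.mul_nonsing_inv _ (isUnit_iff_ne_zero.mpr hdet),
        Matrix.one_mulVec]
    have h2 : A *ᵥ q = -((-A) *ᵥ q) := by rw [Matrix.neg_mulVec]; simp
    rw [h2, h1]
    funext i
    simp
  refine ⟨q, fun i => ?_, hAq⟩
  rcases (hq0 i).lt_or_eq with h | h
  · exact h
  · exfalso
    have hi := congrFun hAq i
    have hsum : (A *ᵥ q) i = ∑ j, A i j * q j := by
      simp [Matrix.mulVec, dotProduct]
    have hnn : 0 ≤ ∑ j, A i j * q j := by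
      refine Finset.sum_nonneg fun j _ => ?_
      rcases eq_or_ne j i with rfl | hj
      · rw [← h]; simp
      · exact mul_nonneg (hMet i j (Ne.symm hj)) (hq0 j)
    rw [← hsum, hi] at hnn
    linarith

lemma dot_neg_quad (B : Matrix (Fin n) (Fin n) ℝ) (x : Fin n → ℝ) :
    dotProduct (star x) ((-B) *ᵥ x) = -(∑ i, ∑ j, B i j * x i * x j) := by
  have h1 : dotProduct (star x) ((-B) *ᵥ x) = ∑ i, ∑ j, -(B i j * x i * x j) := by
    simp only [star_trivial, dotProduct, Matrix.mulVec, Matrix.neg_apply,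
      Finset.mul_sum]
    exact Finset.sum_congr rfl fun i _ => Finset.sum_congr rfl fun j _ => by ring
  rw [h1]
  simp

lemma forward_dir (A : Matrix (Fin n) (Fin n) ℝ)
    (hMetzler : ∀ i j, i ≠ j → 0 ≤ A i j)
    (hHur : ∀ μ ∈ spectrum ℂ (A.map (algebraMap ℝ ℂ)), μ.re < 0) :
    ∃ d : Fin n → ℝ, (∀ i, 0 < d i) ∧
      (-(Aᵀ * Matrix.diagonal d + Matrix.diagonal d * A)).PosDef := by
  have hspec : ∀ t : ℝ, 0 ≤ t → (t • (1 : Matrix (Fin n) (Fin n) ℝ) - A).det ≠ 0 := by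
    intro t ht hdet
    have hmap : algebraMap ℂ (Matrix (Fin n) (Fin n) ℂ) (t : ℂ) - A.map (algebraMap ℝ ℂ)
        = (t • (1 : Matrix (Fin n) (Fin n) ℝ) - A).map (algebraMap ℝ ℂ) := by
      ext i j
      rcases eq_or_ne i j with rfl | hij
      · simp [Matrix.algebraMap_matrix_apply, Matrix.map_apply, Matrix.sub_apply,
          Matrix.smul_apply, Matrix.one_apply, smul_eq_mul]
      · simp [Matrix.algebraMap_matrix_apply, Matrix.map_apply, Matrix.sub_apply,
          Matrix.smul_apply, Matrix.one_apply, hij, smul_eq_mul]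
    have hdetC : (algebraMap ℂ (Matrix (Fin n) (Fin n) ℂ) (t : ℂ)
        - A.map (algebraMap ℝ ℂ)).det = 0 := by
      rw [hmap, show ((t • (1 : Matrix (Fin n) (Fin n) ℝ) - A).map (algebraMap ℝ ℂ))
          = (algebraMap ℝ ℂ).mapMatrix (t • (1 : Matrix (Fin n) (Fin n) ℝ) - A) from rfl,
        ← RingHom.map_det, hdet, map_zero]
    have hmem : (t : ℂ) ∈ spectrum ℂ (A.map (algebraMap ℝ ℂ)) := by
      rw [spectrum.mem_iff]
      intro hunit
      rw [Matrix.isUnit_iff_isUnit_det] at hunit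
      exact (isUnit_iff_ne_zero.mp hunit) hdetC
    have := hHur _ hmem
    simp at this
    linarith
  have hspecT : ∀ t : ℝ, 0 ≤ t → (t • (1 : Matrix (Fin n) (Fin n) ℝ) - Aᵀ).det ≠ 0 := by
    intro t ht
    have : t • (1 : Matrix (Fin n) (Fin n) ℝ) - Aᵀ
        = (t • (1 : Matrix (Fin n) (Fin n) ℝ) - A)ᵀ := by
      rw [Matrix.transpose_sub, Matrix.transpose_smul, Matrix.transpose_one]
    rw [this, Matrix.det_transpose]
    exact hspec t ht
  obtain ⟨q, hq, hAq⟩ := exists_pos_vec A hMetzler hspec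
  obtain ⟨p, hp, hAp⟩ := exists_pos_vec Aᵀ (fun i j hij => hMetzler j i (Ne.symm hij)) hspecT
  set d : Fin n → ℝ := fun i => p i / q i with hd
  have hdpos : ∀ i, 0 < d i := fun i => div_pos (hp i) (hq i)
  set B : Matrix (Fin n) (Fin n) ℝ := Aᵀ * Matrix.diagonal d + Matrix.diagonal d * A with hB
  have hBent : ∀ i j, B i j = A j i * d j + d i * A i j := by
    intro i j
    rw [hB]
    simp [Matrix.add_apply, Matrix.mul_diagonal, Matrix.diagonal_mul, Matrix.transpose_apply]
  have hsym : ∀ i j, B i j = B j i := by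
    intro i j; rw [hBent, hBent]; ring
  have hoff : ∀ i j, i ≠ j → 0 ≤ B i j := by
    intro i j hij
    rw [hBent]
    have := hMetzler i j hij
    have := hMetzler j i (Ne.symm hij)
    have := (hdpos i).le
    have := (hdpos j).le
    positivity
  have hdq : ∀ j, d j * q j = p j := by
    intro j
    rw [hd]
    exact div_mul_cancel₀ _ (ne_of_gt (hq j))
  have hBq : ∀ i, (B *ᵥ q) i < 0 := by
    intro i
    have h1 : (B *ᵥ q) i = ∑ j, (A j i * d j + d i * A i j) * q j := by
      simp only [Matrix.mulVec, dotProduct]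
      exact Finset.sum_congr rfl fun j _ => by rw [hBent]
    have h2 : ∑ j, (A j i * d j + d i * A i j) * q j
        = (∑ j, A j i * p j) + d i * ∑ j, A i j * q j := by
      rw [show (∑ j, (A j i * d j + d i * A i j) * q j)
          = ∑ j, (A j i * p j + d i * (A i j * q j)) from
        Finset.sum_congr rfl fun j _ => by rw [← hdq j]; ring]
      rw [Finset.sum_add_distrib, ← Finset.mul_sum]
    have h3 : ∑ j, A j i * p j = -1 := by
      have := congrFun hAp i
      simpa [Matrix.mulVec, dotProduct, Matrix.transpose_apply] using this
    have h4 : ∑ j, A i j * q j = -1 := by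
      have := congrFun hAq i
      simpa [Matrix.mulVec, dotProduct] using this
    rw [h1, h2, h3, h4]
    have := hdpos i
    nlinarith
  refine ⟨d, hdpos, Matrix.posDef_iff_dotProduct_mulVec.mpr ⟨?_, ?_⟩⟩
  · -- IsHermitian (-B)
    show (-B)ᴴ = -B
    ext i j
    simp only [Matrix.conjTranspose_apply, Matrix.neg_apply, star_trivial]
    rw [hsym j i]
  · intro x hx
    have hq2 := quad_neg B q hsym hoff hq hBq x hx
    have := dot_neg_quad B x
    rw [this]
    linarith

lemma reverse_dir (A : Matrix (Fin n) (Fin n) ℝ) (d : Fin n → ℝ) (hd : ∀ i, 0 < d i)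
    (hPD : (-(Aᵀ * Matrix.diagonal d + Matrix.diagonal d * A)).PosDef) :
    ∀ μ ∈ spectrum ℂ (A.map (algebraMap ℝ ℂ)), μ.re < 0 := by
  intro μ hμ
  set B : Matrix (Fin n) (Fin n) ℝ := Aᵀ * Matrix.diagonal d + Matrix.diagonal d * A with hB
  have hBent : ∀ i j, B i j = A j i * d j + d i * A i j := by
    intro i j
    rw [hB]
    simp [Matrix.add_apply, Matrix.mul_diagonal, Matrix.diagonal_mul, Matrix.transpose_apply]
  have hqf : ∀ z : Fin n → ℝ, z ≠ 0 → ∑ i, ∑ j, B i j * z i * z j < 0 := by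
    intro z hz
    have h1 := hPD.dotProduct_mulVec_pos hz
    rw [dot_neg_quad B z] at h1
    simpa using h1
  have hqf0 : ∀ z : Fin n → ℝ, ∑ i, ∑ j, B i j * z i * z j ≤ 0 := by
    intro z
    by_cases hz : z = 0
    · subst hz; simp
    · exact (hqf z hz).le
  -- eigenvector
  rw [spectrum.mem_iff] at hμ
  have hdet0 : (algebraMap ℂ (Matrix (Fin n) (Fin n) ℂ) μ - A.map (algebraMap ℝ ℂ)).det = 0 := by
    by_contra h
    exact hμ ((Matrix.isUnit_iff_isUnit_det _).mpr (isUnit_iff_ne_zero.mpr h))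
  obtain ⟨v, hv, hveq⟩ := (Matrix.exists_mulVec_eq_zero_iff).mpr hdet0
  have hMv : A.map (algebraMap ℝ ℂ) *ᵥ v = μ • v := by
    rw [Algebra.algebraMap_eq_smul_one, Matrix.sub_mulVec, Matrix.smul_mulVec,
      Matrix.one_mulVec] at hveq
    exact (sub_eq_zero.mp hveq).symm
  have hAv : ∀ i, ∑ j, ((A i j : ℝ) : ℂ) * v j = μ * v i := by
    intro i
    have h := congrFun hMv i
    simpa [Matrix.mulVec, dotProduct, Matrix.map_apply, Pi.smul_apply,
      smul_eq_mul] using h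
  -- S
  set S : ℝ := ∑ i, d i * Complex.normSq (v i) with hSdef
  have hSpos : 0 < S := by
    obtain ⟨i₀, hi₀⟩ := Function.ne_iff.mp hv
    refine Finset.sum_pos' (fun i _ => mul_nonneg (hd i).le (Complex.normSq_nonneg _))
      ⟨i₀, Finset.mem_univ i₀, mul_pos (hd i₀) (Complex.normSq_pos.mpr (by simpa using hi₀))⟩
  -- complex sum E
  set E : ℂ := ∑ i, ∑ j, ((B i j : ℝ) : ℂ) * ((starRingEnd ℂ) (v i) * v j) with hEdef
  -- E = (μ + conj μ) * S
  have hsplit : E = (∑ i, ∑ j, ((A j i * d j : ℝ) : ℂ) * ((starRingEnd ℂ) (v i) * v j))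
      + ∑ i, ∑ j, ((d i * A i j : ℝ) : ℂ) * ((starRingEnd ℂ) (v i) * v j) := by
    rw [hEdef, ← Finset.sum_add_distrib]
    refine Finset.sum_congr rfl fun i _ => ?_
    rw [← Finset.sum_add_distrib]
    refine Finset.sum_congr rfl fun j _ => ?_
    rw [hBent i j]
    push_cast
    ring
  have hT2 : (∑ i, ∑ j, ((d i * A i j : ℝ) : ℂ) * ((starRingEnd ℂ) (v i) * v j))
      = μ * (S : ℂ) := by
    have h1 : ∀ i, ∑ j, ((d i * A i j : ℝ) : ℂ) * ((starRingEnd ℂ) (v i) * v j)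
        = (d i : ℂ) * (starRingEnd ℂ) (v i) * (μ * v i) := by
      intro i
      rw [← hAv i, Finset.mul_sum]
      refine Finset.sum_congr rfl fun j _ => ?_
      push_cast
      ring
    simp_rw [h1]
    rw [hSdef]
    push_cast
    refine Eq.trans (Finset.sum_congr rfl fun i _ => ?_) (Finset.mul_sum _ _ _).symm
    rw [← Complex.mul_conj (v i)]
    ring
  have hT1 : (∑ i, ∑ j, ((A j i * d j : ℝ) : ℂ) * ((starRingEnd ℂ) (v i) * v j))
      = (starRingEnd ℂ) μ * (S : ℂ) := by
    rw [Finset.sum_comm]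
    have h1 : ∀ j, ∑ i, ((A j i * d j : ℝ) : ℂ) * ((starRingEnd ℂ) (v i) * v j)
        = (d j : ℂ) * v j * (starRingEnd ℂ) (μ * v j) := by
      intro j
      rw [← hAv j, map_sum, Finset.mul_sum]
      refine Finset.sum_congr rfl fun i _ => ?_
      rw [_root_.map_mul]
      rw [show (starRingEnd ℂ) ((A j i : ℝ) : ℂ) = ((A j i : ℝ) : ℂ) from Complex.conj_ofReal _]
      push_cast
      ring
    simp_rw [h1]
    rw [hSdef]
    push_cast
    refine Eq.trans (Finset.sum_congr rfl fun j _ => ?_) (Finset.mul_sum _ _ _).symm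
    rw [_root_.map_mul, ← Complex.mul_conj (v j)]
    ring
  have hE : E = (μ + (starRingEnd ℂ) μ) * (S : ℂ) := by
    rw [hsplit, hT1, hT2]; ring
  -- real part of E
  have hEre : E.re = ∑ i, ∑ j, B i j * ((v i).re * (v j).re + (v i).im * (v j).im) := by
    rw [hEdef, Complex.re_sum]
    refine Finset.sum_congr rfl fun i _ => ?_
    rw [Complex.re_sum]
    refine Finset.sum_congr rfl fun j _ => ?_
    rw [Complex.re_ofReal_mul, Complex.mul_re, Complex.conj_re, Complex.conj_im]
    ring
  have hx : (fun i => (v i).re) ≠ 0 ∨ (fun i => (v i).im) ≠ 0 := by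
    by_contra h
    push_neg at h
    apply hv
    funext i
    have h1 := congrFun h.1 i
    have h2 := congrFun h.2 i
    simp only [Pi.zero_apply] at h1 h2
    exact Complex.ext h1 h2
  have hEreneg : E.re < 0 := by
    have hsum : E.re = (∑ i, ∑ j, B i j * (v i).re * (v j).re)
        + ∑ i, ∑ j, B i j * (v i).im * (v j).im := by
      rw [hEre, ← Finset.sum_add_distrib]
      refine Finset.sum_congr rfl fun i _ => ?_
      rw [← Finset.sum_add_distrib]
      exact Finset.sum_congr rfl fun j _ => by ring
    rw [hsum]
    rcases hx with h | h
    · have := hqf _ h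
      have h2 := hqf0 (fun i => (v i).im)
      linarith
    · have := hqf _ h
      have h2 := hqf0 (fun i => (v i).re)
      linarith
  have hEre2 : E.re = 2 * μ.re * S := by
    rw [hE, Complex.add_conj]
    push_cast
    rw [Complex.mul_re]
    simp
  rw [hEre2] at hEreneg
  nlinarith

end Aux

theorem stmt_19 (n : ℕ) (A : Matrix (Fin n) (Fin n) ℝ)
    (hMetzler : ∀ i j, i ≠ j → 0 ≤ A i j) :
    (∀ μ ∈ spectrum ℂ (A.map (algebraMap ℝ ℂ)), μ.re < 0) ↔
    ∃ d : Fin n → ℝ, (∀ i, 0 < d i) ∧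
      (-(Aᵀ * Matrix.diagonal d + Matrix.diagonal d * A)).PosDef := by
  constructor
  · exact fun h => forward_dir A hMetzler h
  · rintro ⟨d, hd, hPD⟩
    exact reverse_dir A d hd hPD
end
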